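/- Let f: ℝⁿ → ℝ be continuously differentiable satisfying the L-descent condition for some L > 0, and let sequences {x^k}, {g^k}, {d^k}, {ε_k}, {r_k}, {t_k} follow the IRG scheme with ρ_k = ε_k for all k. Assume inf_k f(x^k) > −∞ and that there exist δ, δ' > 0 with δ' ≤ (2 − δ)/L and t_k ∈ [δ', (2 − δ)/L] for all k. Then ε_k ↓ 0, every accumulation point of {x^k} is a stationary point of f, and ∇f(x^k) → 0 as k → ∞. -/

import Mathlib

open Filter

/-- The general IRG scheme (Algorithm 1): inexact gradients `g^k` with automatically
controlled errors `ε_k` (and manual errors `ρ_k`), radius updates with factors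
`μ, θ ∈ (0,1)`, reduced directions `d^k`, and iterations `x^{k+1} = x^k + t_k d^k`. -/
def IRGScheme {n : ℕ} (f : EuclideanSpace ℝ (Fin n) → ℝ)
    (x g d : ℕ → EuclideanSpace ℝ (Fin n)) (ε r ρ t : ℕ → ℝ) (μ θ : ℝ) : Prop :=
  (0 < μ ∧ μ < 1) ∧ (0 < θ ∧ θ < 1) ∧
  (∀ k, 0 < ε k) ∧ (∀ k, 0 < r k) ∧ (∀ k, 0 < ρ k) ∧ (∀ k, 0 < t k) ∧
  (∀ k, ‖g k - gradient f (x k)‖ ≤ min (ε k) (ρ k)) ∧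
  (∀ k, ‖g k‖ ≤ r k + ε k →
    r (k + 1) = μ * r k ∧ ε (k + 1) = θ * ε k ∧ d k = 0) ∧
  (∀ k, r k + ε k < ‖g k‖ →
    r (k + 1) = r k ∧ ε (k + 1) = ε k ∧
      d k = -(((‖g k‖ - ε k) / ‖g k‖) • g k)) ∧
  (∀ k, x (k + 1) = x k + t k • d k)

set_option maxHeartbeats 1000000 in
/-- Theorem 5.3: for the IRG method with constant-type stepsizes
`t_k ∈ [δ', (2-δ)/L]`, under the L-descent condition, `ρ_k = ε_k` and
`inf f(x^k) > -∞`, one has `ε_k ↓ 0`, every accumulation point of `{x^k}` is a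
stationary point of `f`, and `∇f(x^k) → 0`. -/
theorem stmt16 {n : ℕ} (f : EuclideanSpace ℝ (Fin n) → ℝ) (hf : ContDiff ℝ 1 f)
    (L : ℝ) (hL : 0 < L)
    (hdesc : ∀ a b : EuclideanSpace ℝ (Fin n),
      f b ≤ f a + (inner ℝ (gradient f a) (b - a) : ℝ) + L / 2 * ‖b - a‖ ^ 2)
    (x g d : ℕ → EuclideanSpace ℝ (Fin n)) (ε r t : ℕ → ℝ) (μ θ : ℝ)
    (hirg : IRGScheme f x g d ε r ε t μ θ)
    (hinf : BddBelow (Set.range fun k => f (x k)))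
    (δ δ' : ℝ) (hδ : 0 < δ) (hδ' : 0 < δ') (hδδ' : δ' ≤ (2 - δ) / L)
    (hstep : ∀ k, t k ∈ Set.Icc δ' ((2 - δ) / L)) :
    Tendsto ε atTop (nhds 0) ∧
    (∀ xbar : EuclideanSpace ℝ (Fin n),
      (∃ φ : ℕ → ℕ, StrictMono φ ∧ Tendsto (x ∘ φ) atTop (nhds xbar)) →
      gradient f xbar = 0) ∧
    Tendsto (fun k => gradient f (x k)) atTop (nhds 0) := by
  obtain ⟨⟨hμ0, hμ1⟩, ⟨hθ0, hθ1⟩, hε, hr, -, ht, hg, hnull, hser, hx⟩ := hirg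
  have hg' : ∀ k, ‖g k - gradient f (x k)‖ ≤ ε k := fun k => by
    simpa using hg k
  set c0 : ℝ := δ' * (δ / 2) with hc0
  have hc0pos : 0 < c0 := by positivity
  -- norm of d on serious steps
  have hdnorm_ser : ∀ k, r k + ε k < ‖g k‖ → ‖d k‖ = ‖g k‖ - ε k := by
    intro k hk
    obtain ⟨-, -, hd⟩ := hser k hk
    have hεg : ε k < ‖g k‖ := by have := hr k; linarith
    have hgpos : 0 < ‖g k‖ := lt_trans (hε k) hεg
    rw [hd, norm_neg, norm_smul, Real.norm_eq_abs,
      abs_of_nonneg (div_nonneg (by linarith) hgpos.le),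
      div_mul_cancel₀ _ hgpos.ne']
  -- per-step descent
  have key : ∀ k, f (x (k + 1)) + c0 * ‖d k‖ ^ 2 ≤ f (x k) := by
    intro k
    by_cases hk : ‖g k‖ ≤ r k + ε k
    · obtain ⟨-, -, hd⟩ := hnull k hk
      have hx1 : x (k + 1) = x k := by rw [hx k, hd, smul_zero, add_zero]
      rw [hx1, hd]
      simp
    · push_neg at hk
      obtain ⟨-, -, hd⟩ := hser k hk
      have hεg : ε k < ‖g k‖ := by have := hr k; linarith
      have hgpos : 0 < ‖g k‖ := lt_trans (hε k) hεg
      have hdn := hdnorm_ser k (by linarith)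
      -- inner product bound
      have hinner_g : ‖g k‖ * (‖g k‖ - ε k) ≤ (inner ℝ (gradient f (x k)) (g k) : ℝ) := by
        have h1 : (inner ℝ (gradient f (x k)) (g k) : ℝ)
            = (inner ℝ (g k) (g k) : ℝ) - (inner ℝ (g k - gradient f (x k)) (g k) : ℝ) := by
          rw [inner_sub_left]; ring
        have h2 : (inner ℝ (g k - gradient f (x k)) (g k) : ℝ)
            ≤ ε k * ‖g k‖ :=
          le_trans (real_inner_le_norm _ _)
            (mul_le_mul_of_nonneg_right (hg' k) (norm_nonneg _))
        have h3 : (inner ℝ (g k) (g k) : ℝ) = ‖g k‖ ^ 2 := real_inner_self_eq_norm_sq _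
        nlinarith
      have hc : (0 : ℝ) ≤ (‖g k‖ - ε k) / ‖g k‖ := div_nonneg (by linarith) hgpos.le
      have hcs : (‖g k‖ - ε k) / ‖g k‖ * ‖g k‖ = ‖g k‖ - ε k :=
        div_mul_cancel₀ _ hgpos.ne'
      have hinner_d : (inner ℝ (gradient f (x k)) (d k) : ℝ) ≤ -‖d k‖ ^ 2 := by
        rw [hdn, hd, inner_neg_right, real_inner_smul_right]
        nlinarith [mul_le_mul_of_nonneg_left hinner_g hc]
      -- descent condition
      have hxk : x (k + 1) - x k = t k • d k := by rw [hx k]; abel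
      have hmain := hdesc (x k) (x (k + 1))
      rw [hxk, real_inner_smul_right, norm_smul, Real.norm_eq_abs,
        abs_of_pos (ht k)] at hmain
      obtain ⟨htl, htu⟩ := hstep k
      have hLt : t k * L ≤ 2 - δ := (le_div_iff₀ hL).mp htu
      have hfac : c0 ≤ t k * (1 - L * t k / 2) := by
        have h1 : δ' * (δ / 2) ≤ δ' * (1 - L * t k / 2) :=
          mul_le_mul_of_nonneg_left (by nlinarith) hδ'.le
        have h2 : δ' * (1 - L * t k / 2) ≤ t k * (1 - L * t k / 2) :=
          mul_le_mul_of_nonneg_right htl (by nlinarith)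
        rw [hc0]; linarith
      nlinarith [mul_le_mul_of_nonneg_right hfac (sq_nonneg ‖d k‖),
        mul_le_mul_of_nonneg_left hinner_d (ht k).le]
  -- telescoping
  obtain ⟨B, hB⟩ := hinf
  have hB' : ∀ k, B ≤ f (x k) := fun k => hB ⟨k, rfl⟩
  have hsum : ∀ K, ∑ k ∈ Finset.range K, c0 * ‖d k‖ ^ 2 ≤ f (x 0) - B := by
    intro K
    have h1 : ∀ K, ∑ k ∈ Finset.range K, c0 * ‖d k‖ ^ 2 ≤ f (x 0) - f (x K) := by
      intro K
      induction K with
      | zero => simp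
      | succ K ih =>
          rw [Finset.sum_range_succ]
          have := key K
          linarith
    linarith [h1 K, hB' K]
  have hsummable : Summable fun k => c0 * ‖d k‖ ^ 2 :=
    summable_of_sum_range_le (fun k => by positivity) hsum
  have hd0 : Tendsto (fun k => ‖d k‖) atTop (nhds 0) := by
    have hd2 : Tendsto (fun k => ‖d k‖ ^ 2) atTop (nhds 0) := by
      have := hsummable.tendsto_atTop_zero.div_const c0
      simpa [mul_div_cancel_left₀ _ hc0pos.ne'] using this
    have h2 := (Real.continuous_sqrt.tendsto 0).comp hd2
    have h3 : ((fun y => Real.sqrt y) ∘ fun k => ‖d k‖ ^ 2) = fun k => ‖d k‖ :=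
      funext fun k => Real.sqrt_sq (norm_nonneg _)
    rw [h3] at h2
    simpa using h2
  -- monotonicity of ε and r
  have hεmono : ∀ k, ε (k + 1) ≤ ε k := by
    intro k
    by_cases hk : ‖g k‖ ≤ r k + ε k
    · obtain ⟨-, h2, -⟩ := hnull k hk
      rw [h2]; nlinarith [hε k]
    · push_neg at hk
      obtain ⟨-, h2, -⟩ := hser k hk
      rw [h2]
  have hrmono : ∀ k, r (k + 1) ≤ r k := by
    intro k
    by_cases hk : ‖g k‖ ≤ r k + ε k
    · obtain ⟨h1, -, -⟩ := hnull k hk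
      rw [h1]; nlinarith [hr k]
    · push_neg at hk
      obtain ⟨h1, -, -⟩ := hser k hk
      rw [h1]
  have hεanti : Antitone ε := antitone_nat_of_succ_le hεmono
  have hranti : Antitone r := antitone_nat_of_succ_le hrmono
  -- infinitely many null steps
  have hfreq : ∃ᶠ k in atTop, ‖g k‖ ≤ r k + ε k := by
    rw [frequently_atTop]
    intro K
    by_contra hcon
    push_neg at hcon
    have hrconst : ∀ k, K ≤ k → r k = r K := by
      intro k hk
      induction k, hk using Nat.le_induction with
      | base => rfl
      | succ m hm ih =>
          obtain ⟨h1, -, -⟩ := hser m (hcon m hm)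
          rw [h1, ih]
    obtain ⟨k, hk1, hk2⟩ := ((hd0.eventually_lt_const (hr K)).and
      (eventually_ge_atTop K)).exists
    have hks := hcon k hk2
    have := hdnorm_ser k hks
    have := hrconst k hk2
    have := hε k
    linarith
  obtain ⟨φ, hφmono, hφ⟩ := extraction_of_frequently_atTop hfreq
  -- ε → 0
  have hεbdd : BddBelow (Set.range ε) := ⟨0, by rintro y ⟨k, rfl⟩; exact (hε k).le⟩
  have hεlim : Tendsto ε atTop (nhds (⨅ k, ε k)) := tendsto_atTop_ciInf hεanti hεbdd
  set lε := ⨅ k, ε k with hlεdef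
  have hεlim0 : Tendsto ε atTop (nhds 0) := by
    have h1 : Tendsto (fun j => ε (φ j + 1)) atTop (nhds lε) :=
      hεlim.comp ((tendsto_add_atTop_nat 1).comp hφmono.tendsto_atTop)
    have h2 : (fun j => ε (φ j + 1)) = fun j => θ * ε (φ j) :=
      funext fun j => (hnull _ (hφ j)).2.1
    have h3 : Tendsto (fun j => θ * ε (φ j)) atTop (nhds (θ * lε)) :=
      (hεlim.comp hφmono.tendsto_atTop).const_mul θ
    have h4 : lε = θ * lε := tendsto_nhds_unique (h2 ▸ h1) h3
    have h5 : lε * (1 - θ) = 0 := by linarith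
    rcases mul_eq_zero.mp h5 with h | h
    · rwa [h] at hεlim
    · linarith
  -- r → 0
  have hrbdd : BddBelow (Set.range r) := ⟨0, by rintro y ⟨k, rfl⟩; exact (hr k).le⟩
  have hrlim : Tendsto r atTop (nhds (⨅ k, r k)) := tendsto_atTop_ciInf hranti hrbdd
  set lr := ⨅ k, r k with hlrdef
  have hrlim0 : Tendsto r atTop (nhds 0) := by
    have h1 : Tendsto (fun j => r (φ j + 1)) atTop (nhds lr) :=
      hrlim.comp ((tendsto_add_atTop_nat 1).comp hφmono.tendsto_atTop)
    have h2 : (fun j => r (φ j + 1)) = fun j => μ * r (φ j) :=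
      funext fun j => (hnull _ (hφ j)).1
    have h3 : Tendsto (fun j => μ * r (φ j)) atTop (nhds (μ * lr)) :=
      (hrlim.comp hφmono.tendsto_atTop).const_mul μ
    have h4 : lr = μ * lr := tendsto_nhds_unique (h2 ▸ h1) h3
    have h5 : lr * (1 - μ) = 0 := by linarith
    rcases mul_eq_zero.mp h5 with h | h
    · rwa [h] at hrlim
    · linarith
  -- gradient bound
  have hgradbd : ∀ k, ‖gradient f (x k)‖ ≤ r k + ‖d k‖ + 2 * ε k := by
    intro k
    have hng : ‖gradient f (x k)‖ ≤ ‖g k‖ + ε k := by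
      have h0 : gradient f (x k) = g k - (g k - gradient f (x k)) := by abel
      calc ‖gradient f (x k)‖ = ‖g k - (g k - gradient f (x k))‖ := by rw [← h0]
        _ ≤ ‖g k‖ + ‖g k - gradient f (x k)‖ := norm_sub_le _ _
        _ ≤ ‖g k‖ + ε k := by linarith [hg' k]
    by_cases hk : ‖g k‖ ≤ r k + ε k
    · have := norm_nonneg (d k); linarith
    · push_neg at hk
      have := hdnorm_ser k hk
      have := hr k
      linarith
  have hbound_to : Tendsto (fun k => r k + ‖d k‖ + 2 * ε k) atTop (nhds 0) := by
    have := (hrlim0.add hd0).add (hεlim0.const_mul 2)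
    simpa using this
  have hgradnorm : Tendsto (fun k => ‖gradient f (x k)‖) atTop (nhds 0) :=
    squeeze_zero (fun k => norm_nonneg _) hgradbd hbound_to
  have hgrad0 : Tendsto (fun k => gradient f (x k)) atTop (nhds 0) :=
    tendsto_zero_iff_norm_tendsto_zero.mpr hgradnorm
  -- continuity of the gradient
  have hcont : Continuous (gradient f) := by
    have h1 : Continuous (fderiv ℝ f) := hf.continuous_fderiv one_ne_zero
    exact ((InnerProductSpace.toDual ℝ
      (EuclideanSpace ℝ (Fin n))).symm.continuous.comp h1 : _)
  refine ⟨hεlim0, ?_, hgrad0⟩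
  rintro xbar ⟨ψ, hψ, hconv⟩
  have h1 : Tendsto (fun j => gradient f (x (ψ j))) atTop (nhds (gradient f xbar)) :=
    (hcont.tendsto xbar).comp hconv
  have h2 : Tendsto (fun j => gradient f (x (ψ j))) atTop (nhds 0) :=
    hgrad0.comp hψ.tendsto_atTop
  exact tendsto_nhds_unique h1 h2
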